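/- Let α ∈ ℝ and let x : ℝ → ℝ be a twice differentiable function with x(t) ≠ 0 for all t, satisfying ẍ(t) = 4α/x(t)³ for all t. Then the second derivative of t ↦ x(t)² is constant, equal to 8E₁ where E₁ = ¼ẋ(t)² + α/x(t)² (which is itself constant in t); consequently t ↦ x(t)² is a polynomial in t of degree at most 2. -/

import Mathlib

/-- For the separated Calogero equation `ẍ = 4α/x³` (with `x` never zero), the
energy `E₁ = ¼ẋ² + α/x²` is constant, the second derivative of `t ↦ x(t)²`
is the constant `8E₁`, and consequently `t ↦ x(t)²` is a polynomial in `t` of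
degree at most 2. -/
theorem stmt_15 (α : ℝ) (x : ℝ → ℝ)
    (hx : Differentiable ℝ x) (hx' : Differentiable ℝ (deriv x))
    (hne : ∀ t : ℝ, x t ≠ 0)
    (heq : ∀ t : ℝ, deriv (deriv x) t = 4 * α / (x t) ^ 3) :
    ∃ E₁ : ℝ,
      (∀ t : ℝ, (1 / 4) * (deriv x t) ^ 2 + α / (x t) ^ 2 = E₁) ∧
      (∀ t : ℝ, deriv (deriv (fun s => (x s) ^ 2)) t = 8 * E₁) ∧
      (∃ a b c : ℝ, ∀ t : ℝ, (x t) ^ 2 = a * t ^ 2 + b * t + c) := by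
  set E₁ : ℝ := (1 / 4) * (deriv x 0) ^ 2 + α / (x 0) ^ 2 with hE
  have hxd : ∀ t, HasDerivAt x (deriv x t) t := fun t => (hx t).hasDerivAt
  have hxd' : ∀ t, HasDerivAt (deriv x) (4 * α / (x t) ^ 3) t := fun t =>
    heq t ▸ (hx' t).hasDerivAt
  -- energy function and its derivative
  have hEder : ∀ t, HasDerivAt (fun t => (1 / 4) * (deriv x t) ^ 2 + α / (x t) ^ 2) 0 t := by
    intro t
    have h1 : HasDerivAt (fun t => (1 / 4) * (deriv x t) ^ 2)
        ((1 / 4) * ((2 : ℕ) * (deriv x t) ^ 1 * (4 * α / (x t) ^ 3))) t :=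
      ((hxd' t).pow 2).const_mul (1 / 4)
    have h2 : HasDerivAt (fun t => α / (x t) ^ 2)
        ((0 * (x t) ^ 2 - α * ((2 : ℕ) * (x t) ^ 1 * deriv x t)) / ((x t) ^ 2) ^ 2) t :=
      (hasDerivAt_const t α).div ((hxd t).pow 2) (pow_ne_zero 2 (hne t))
    have := h1.add h2
    refine this.congr_deriv ?_
    have h0 := hne t
    field_simp
    ring
  have hEconst : ∀ t : ℝ, (1 / 4) * (deriv x t) ^ 2 + α / (x t) ^ 2 = E₁ := by
    intro t
    have := is_const_of_deriv_eq_zero (f := fun t => (1 / 4) * (deriv x t) ^ 2 + α / (x t) ^ 2)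
      (fun s => (hEder s).differentiableAt) (fun s => (hEder s).deriv) t 0
    simpa [hE] using this
  clear_value E₁
  clear hE
  refine ⟨E₁, hEconst, ?_, ?_⟩
  all_goals
    have hyd : ∀ t, HasDerivAt (fun s => (x s) ^ 2) (2 * x t * deriv x t) t := by
      intro t
      have := (hxd t).pow 2
      refine this.congr_deriv ?_
      push_cast; ring
    have hy : deriv (fun s => (x s) ^ 2) = fun t => 2 * x t * deriv x t :=
      funext fun t => (hyd t).deriv
    have hDd : ∀ t, HasDerivAt (fun t => 2 * x t * deriv x t) (8 * E₁) t := by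
      intro t
      have h := (((hxd t).const_mul 2).mul (hxd' t))
      refine h.congr_deriv ?_
      have hc := hEconst t
      have h0 := hne t
      field_simp at hc ⊢
      linear_combination (2 : ℝ) * hc
  · intro t
    rw [hy]
    exact (hDd t).deriv
  · -- polynomial form
    have hvel : ∀ t : ℝ, 2 * x t * deriv x t = 8 * E₁ * t + 2 * x 0 * deriv x 0 := by
      intro t
      have key : ∀ s, HasDerivAt (fun u => 2 * x u * deriv x u - 8 * E₁ * u) 0 s := by
        intro s
        have := (hDd s).sub ((hasDerivAt_id s).const_mul (8 * E₁))
        exact this.congr_deriv (by ring)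
      have := is_const_of_deriv_eq_zero (f := fun u => 2 * x u * deriv x u - 8 * E₁ * u)
        (fun s => (key s).differentiableAt) (fun s => (key s).deriv) t 0
      linarith
    refine ⟨4 * E₁, 2 * x 0 * deriv x 0, (x 0) ^ 2, fun t => ?_⟩
    have key : ∀ s, HasDerivAt
        (fun u => (x u) ^ 2 - (4 * E₁ * u ^ 2 + 2 * x 0 * deriv x 0 * u)) 0 s := by
      intro s
      have hq : HasDerivAt (fun u : ℝ => 4 * E₁ * u ^ 2 + 2 * x 0 * deriv x 0 * u)
          (4 * E₁ * ((2 : ℕ) * s ^ 1) + 2 * x 0 * deriv x 0 * 1) s :=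
        (((hasDerivAt_pow 2 s)).const_mul (4 * E₁)).add ((hasDerivAt_id s).const_mul (2 * x 0 * deriv x 0))
      have := (hyd s).sub hq
      refine this.congr_deriv ?_
      have := hvel s
      push_cast
      linarith
    have := is_const_of_deriv_eq_zero
      (f := fun u => (x u) ^ 2 - (4 * E₁ * u ^ 2 + 2 * x 0 * deriv x 0 * u))
      (fun s => (key s).differentiableAt) (fun s => (key s).deriv) t 0
    nlinarith [this]
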